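/- Let X be a complex Banach space, n ≥ 1, x ∈ X, and let f : [0,∞)^n → X be locally Bochner integrable. Suppose there exist ω₁,…,ωₙ ∈ ℝ such that sup{‖e^{−ω₁t₁−…−ωₙtₙ} f(t₁,…,tₙ)‖ : t₁ ≥ 0,…,tₙ ≥ 0} < ∞. If f(t₁,…,tₙ) → x as (t₁,…,tₙ) → (0,…,0) in [0,∞)^n, then for all real λⱼ > max(ωⱼ,0) one has λ ∈ Ω_abs(f), and λ₁·…·λₙ·(Lf)(λ₁,…,λₙ) → x as λ₁ → +∞, …, λₙ → +∞ (i.e. for every ε > 0 there is M > 0 such that ‖λ₁·…·λₙ·(Lf)(λ) − x‖ < ε whenever the real numbers λⱼ all exceed M). -/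

import Mathlib

open MeasureTheory Set Filter

noncomputable section

/-- The nonnegative orthant `[0,∞)^n`. -/
def orthant (n : ℕ) : Set (Fin n → ℝ) := {t | ∀ j, 0 ≤ t j}

/-- The box `[0,t₁] × … × [0,tₙ]`. -/
def box {n : ℕ} (t : Fin n → ℝ) : Set (Fin n → ℝ) := Set.univ.pi fun j => Set.Icc 0 (t j)

variable {X : Type*} [NormedAddCommGroup X] [NormedSpace ℂ X]

/-- The Laplace kernel `t ↦ e^{-λ₁t₁-…-λₙtₙ} f(t)`. -/
def lapKer {n : ℕ} (lam : Fin n → ℂ) (f : (Fin n → ℝ) → X) : (Fin n → ℝ) → X :=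
  fun t => Complex.exp (-(∑ j, lam j * (t j : ℂ))) • f t

/-- Absolute convergence of the Laplace integral at `lam`: membership in `Ω_abs(f)`. -/
def OmegaAbs {n : ℕ} (f : (Fin n → ℝ) → X) (lam : Fin n → ℂ) : Prop :=
  IntegrableOn (lapKer lam f) (orthant n)

/-- The (absolutely convergent) Laplace transform `(Lf)(λ)`. -/
def lapTr {n : ℕ} (f : (Fin n → ℝ) → X) (lam : Fin n → ℂ) : X :=
  ∫ t in orthant n, lapKer lam f t

/-- The truncated Laplace integral `I(f,λ,t)`. -/
def truncInt {n : ℕ} (f : (Fin n → ℝ) → X) (lam : Fin n → ℂ) (t : Fin n → ℝ) : X :=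
  ∫ s in box t, lapKer lam f s

/-- Convergence of the Laplace integral at `lam` with value `F`. -/
def LapConvTo {n : ℕ} (f : (Fin n → ℝ) → X) (lam : Fin n → ℂ) (F : X) : Prop :=
  ∀ ε > 0, ∃ M > 0, ∀ t : Fin n → ℝ, (∀ j, M < t j) → ‖truncInt f lam t - F‖ < ε

/-- Convergence of the Laplace integral at `lam`: membership in `Ω(f)`. -/
def OmegaConv {n : ℕ} (f : (Fin n → ℝ) → X) (lam : Fin n → ℂ) : Prop :=
  ∃ F, LapConvTo f lam F

/-- Boundedness of all truncated Laplace integrals: membership in `Ω_b(f)`. -/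
def OmegaBdd {n : ℕ} (f : (Fin n → ℝ) → X) (lam : Fin n → ℂ) : Prop :=
  ∃ C, ∀ t : Fin n → ℝ, ‖truncInt f lam t‖ ≤ C

/-- Local Bochner integrability on `[0,∞)^n`. -/
def LocInt {n : ℕ} (f : (Fin n → ℝ) → X) : Prop :=
  ∀ t : Fin n → ℝ, IntegrableOn f (box t)

lemma intIci_exp {c : ℝ} (hc : 0 < c) (a : ℝ) :
    IntegrableOn (fun s : ℝ => Real.exp (-(c * s))) (Ici a) := by
  rw [integrableOn_Ici_iff_integrableOn_Ioi]
  simpa [neg_mul] using exp_neg_integrableOn_Ioi a hc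

lemma intIci_exp_val {c : ℝ} (hc : 0 < c) (a : ℝ) :
    ∫ s in Ici a, Real.exp (-(c * s)) = Real.exp (-(c * a)) / c := by
  rw [integral_Ici_eq_integral_Ioi]
  have hderiv : ∀ y ∈ Ici a, HasDerivAt (fun s : ℝ => -(Real.exp (-(c * s)) / c))
      (Real.exp (-(c * y))) y := by
    intro y _
    have h1 : HasDerivAt (fun s : ℝ => -(c * s)) (-c) y := by
      simpa using ((hasDerivAt_id y).const_mul c).fun_neg
    have h2 := (Real.hasDerivAt_exp (-(c * y))).comp y h1
    have h3 := (h2.div_const c).fun_neg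
    rw [mul_neg, neg_div, neg_neg, mul_div_assoc, div_self hc.ne', mul_one] at h3
    exact h3
  have htend : Tendsto (fun s : ℝ => -(Real.exp (-(c * s)) / c)) atTop (nhds 0) := by
    have h1 : Tendsto (fun s : ℝ => -(c * s)) atTop atBot := by
      apply tendsto_neg_atTop_atBot.comp
      exact Tendsto.const_mul_atTop hc tendsto_id
    have := (Real.tendsto_exp_atBot.comp h1).div_const c |>.neg
    simpa using this
  have := integral_Ioi_of_hasDerivAt_of_tendsto' hderiv
    ((intIci_exp hc a).mono_set Ioi_subset_Ici_self) htend
  rw [this]; ring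

lemma pi_indicator_prod {n : ℕ} (g : Fin n → ℝ → ℝ) (s : Fin n → Set ℝ) :
    (Set.univ.pi s).indicator (fun t : Fin n → ℝ => ∏ j, g j (t j)) =
      fun t => ∏ j, (s j).indicator (g j) (t j) := by
  funext t
  by_cases h : t ∈ Set.univ.pi s
  · rw [indicator_of_mem h]
    exact Finset.prod_congr rfl fun j _ => (indicator_of_mem (h j (mem_univ j)) _).symm
  · rw [indicator_of_notMem h]
    rw [mem_univ_pi] at h
    push_neg at h
    obtain ⟨j, hj⟩ := h
    exact (Finset.prod_eq_zero (Finset.mem_univ j) (indicator_of_notMem hj _)).symm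

lemma pi_integrableOn {n : ℕ} (g : Fin n → ℝ → ℝ) (s : Fin n → Set ℝ)
    (hs : ∀ j, MeasurableSet (s j)) (hg : ∀ j, IntegrableOn (g j) (s j)) :
    IntegrableOn (fun t : Fin n → ℝ => ∏ j, g j (t j)) (Set.univ.pi s) := by
  refine (integrable_indicator_iff (MeasurableSet.univ_pi hs)).mp ?_
  rw [pi_indicator_prod]
  exact Integrable.fintype_prod fun j => (integrable_indicator_iff (hs j)).mpr (hg j)

lemma pi_integral {n : ℕ} (g : Fin n → ℝ → ℝ) (s : Fin n → Set ℝ)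
    (hs : ∀ j, MeasurableSet (s j)) :
    ∫ t in Set.univ.pi s, ∏ j, g j (t j) = ∏ j, ∫ y in s j, g j y := by
  rw [← integral_indicator (MeasurableSet.univ_pi hs), pi_indicator_prod]
  rw [volume_pi, integral_fintype_prod_eq_prod (ι := Fin n) (fun j => (s j).indicator (g j))]
  exact Finset.prod_congr rfl fun j _ => integral_indicator (hs j)

lemma pi_exp_integrableOn {n : ℕ} (l c a : Fin n → ℝ) (hc : ∀ j, 0 < c j) :
    IntegrableOn (fun t : Fin n → ℝ => ∏ j, l j * Real.exp (-(c j * t j)))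
      (Set.univ.pi fun j => Ici (a j)) :=
  pi_integrableOn (fun j s => l j * Real.exp (-(c j * s))) (fun j => Ici (a j))
    (fun _ => measurableSet_Ici)
    (fun j => (intIci_exp (hc j) (a j)).const_mul (l j))

lemma pi_exp_integral {n : ℕ} (l c a : Fin n → ℝ) (hc : ∀ j, 0 < c j) :
    ∫ t in Set.univ.pi fun j => Ici (a j), ∏ j, l j * Real.exp (-(c j * t j))
      = ∏ j, l j / c j * Real.exp (-(c j * a j)) := by
  rw [pi_integral (fun j s => l j * Real.exp (-(c j * s))) (fun j => Ici (a j))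
    (fun _ => measurableSet_Ici)]
  refine Finset.prod_congr rfl fun j _ => ?_
  rw [integral_const_mul, intIci_exp_val (hc j)]
  ring

set_option maxHeartbeats 1200000 in
/-- Abelian/Tauberian result: if `e^{−ω·t} f(t)` is bounded on `[0,∞)^n` and `f(t) → x` as
`t → 0` in `[0,∞)^n`, then for all real `λⱼ > max(ωⱼ,0)` the Laplace integral converges
absolutely at `λ`, and `λ₁·…·λₙ·(Lf)(λ) → x` as `λ₁ → ∞, …, λₙ → ∞`. -/
theorem abelian_at_zero [CompleteSpace X]
    (n : ℕ) (hn : 1 ≤ n) (x : X) (f : (Fin n → ℝ) → X) (hf : LocInt f)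
    (ω : Fin n → ℝ)
    (hbd : ∃ C, ∀ t ∈ orthant n, Real.exp (-(∑ j, ω j * t j)) * ‖f t‖ ≤ C)
    (hx : ∀ ε > 0, ∃ δ > 0, ∀ t ∈ orthant n, (∀ j, t j < δ) → ‖f t - x‖ < ε) :
    (∀ lam : Fin n → ℝ, (∀ j, max (ω j) 0 < lam j) →
      OmegaAbs f (fun j => (lam j : ℂ))) ∧
    (∀ ε > 0, ∃ M > 0, ∀ lam : Fin n → ℝ, (∀ j, M < lam j) →
      ‖(∏ j, (lam j : ℂ)) • lapTr f (fun j => (lam j : ℂ)) - x‖ < ε) := by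
  obtain ⟨C₀, hC₀⟩ := hbd
  set C : ℝ := max C₀ 0 with hCdef
  have hC0 : (0:ℝ) ≤ C := le_max_right _ _
  have hC : ∀ t ∈ orthant n, ‖f t‖ ≤ C * Real.exp (∑ j, ω j * t j) := by
    intro t ht
    have h1 : Real.exp (-(∑ j, ω j * t j)) * ‖f t‖ ≤ C := (hC₀ t ht).trans (le_max_left _ _)
    have h2 := mul_le_mul_of_nonneg_left h1 (Real.exp_nonneg (∑ j, ω j * t j))
    rw [← mul_assoc, ← Real.exp_add, add_neg_cancel, Real.exp_zero, one_mul] at h2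
    linarith [h2]
  have horth : orthant n = Set.univ.pi (fun _ : Fin n => Ici (0:ℝ)) := by
    ext t; simp [orthant, Set.mem_univ_pi, mem_Ici, Pi.le_def]
  have horthm : MeasurableSet (orthant n) := by
    rw [horth]; exact MeasurableSet.univ_pi fun _ => measurableSet_Ici
  have hfm : AEStronglyMeasurable f (volume.restrict (orthant n)) := by
    have hcover : orthant n = ⋃ k : ℕ, box (fun _ => (k:ℝ)) := by
      ext t; constructor
      · intro ht
        obtain ⟨k, hk⟩ := exists_nat_ge (∑ j, t j)
        refine mem_iUnion.mpr ⟨k, fun j _ => ⟨ht j, ?_⟩⟩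
        exact le_trans (Finset.single_le_sum (fun i _ => ht i) (Finset.mem_univ j)) hk
      · intro ht
        obtain ⟨k, hk⟩ := mem_iUnion.mp ht
        exact fun j => (hk j (mem_univ j)).1
    rw [hcover, aestronglyMeasurable_iUnion_iff]
    exact fun k => (hf _).aestronglyMeasurable
  have hker : ∀ (lam : Fin n → ℝ) (t : Fin n → ℝ),
      lapKer (fun j => (lam j : ℂ)) f t = Real.exp (-(∑ j, lam j * t j)) • f t := by
    intro lam t
    unfold lapKer
    have h1 : -(∑ j, ((lam j : ℂ)) * ((t j : ℝ) : ℂ)) = ((-(∑ j, lam j * t j) : ℝ) : ℂ) := by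
      push_cast; ring
    rw [h1, ← Complex.ofReal_exp, Complex.coe_smul]
  have hexpmul : ∀ (lam : Fin n → ℝ) (t : Fin n → ℝ),
      Real.exp (-(∑ j, lam j * t j)) * Real.exp (∑ j, ω j * t j)
        = ∏ j, Real.exp (-((lam j - ω j) * t j)) := by
    intro lam t
    rw [← Real.exp_add, ← Real.exp_sum]
    congr 1
    rw [neg_add_eq_sub, ← Finset.sum_sub_distrib]
    exact Finset.sum_congr rfl fun j _ => by ring
  have habs : ∀ lam : Fin n → ℝ, (∀ j, max (ω j) 0 < lam j) →
      OmegaAbs f (fun j => (lam j : ℂ)) := by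
    intro lam hlam
    have hmu : ∀ j, 0 < lam j - ω j :=
      fun j => sub_pos.mpr ((le_max_left _ _).trans_lt (hlam j))
    have hint : IntegrableOn
        (fun t : Fin n → ℝ => C * ∏ j, Real.exp (-((lam j - ω j) * t j))) (orthant n) := by
      rw [horth]
      have := (pi_exp_integrableOn (fun _ => (1:ℝ)) (fun j => lam j - ω j)
        (fun _ => 0) hmu).const_mul C
      simp only [one_mul] at this; exact this
    refine Integrable.mono' hint ?_ ?_
    · have hcont : Continuous fun t : Fin n → ℝ =>
          Complex.exp (-(∑ j, ((lam j : ℂ)) * ((t j : ℝ) : ℂ))) := by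
        fun_prop
      exact (hcont.aestronglyMeasurable.restrict).smul hfm
    · rw [ae_restrict_iff' horthm]
      refine ae_of_all _ fun t ht => ?_
      rw [hker lam t, norm_smul, Real.norm_eq_abs, abs_of_pos (Real.exp_pos _)]
      calc Real.exp (-(∑ j, lam j * t j)) * ‖f t‖
          ≤ Real.exp (-(∑ j, lam j * t j)) * (C * Real.exp (∑ j, ω j * t j)) :=
            mul_le_mul_of_nonneg_left (hC t ht) (Real.exp_nonneg _)
        _ = C * (Real.exp (-(∑ j, lam j * t j)) * Real.exp (∑ j, ω j * t j)) := by ring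
        _ = C * ∏ j, Real.exp (-((lam j - ω j) * t j)) := by rw [hexpmul]
  refine ⟨habs, ?_⟩
  intro ε hε
  obtain ⟨δ, hδ0, hδ⟩ := hx (ε/2) (half_pos hε)
  set W := ∑ j, max (ω j) 0 with hWdef
  have hWnn : (0:ℝ) ≤ W := Finset.sum_nonneg fun j _ => le_max_right _ _
  have hWj : ∀ j, max (ω j) 0 ≤ W :=
    fun j => Finset.single_le_sum (fun i _ => le_max_right (ω i) 0) (Finset.mem_univ j)
  set K : ℝ := (n : ℝ) * 2^n * (C + ‖x‖) + 1 with hKdef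
  have htend : Tendsto (fun M : ℝ => K * Real.exp (-(M * (δ/2)))) atTop (nhds 0) := by
    have h1 : Tendsto (fun M : ℝ => -(M * (δ/2))) atTop atBot := by
      apply tendsto_neg_atTop_atBot.comp
      exact Tendsto.atTop_mul_const (half_pos hδ0) tendsto_id
    have := (Real.tendsto_exp_atBot.comp h1).const_mul K
    simpa [Function.comp] using this
  have hev : ∀ᶠ M : ℝ in atTop,
      K * Real.exp (-(M * (δ/2))) < ε/2 ∧ 2*W+1 ≤ M ∧ 0 < M := by
    filter_upwards [htend.eventually (gt_mem_nhds (half_pos hε)),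
      eventually_ge_atTop (2*W+1), eventually_gt_atTop 0] with M h1 h2 h3
    exact ⟨h1, h2, h3⟩
  obtain ⟨M, hM1, hM2, hM3⟩ := hev.exists
  refine ⟨M, hM3, ?_⟩
  intro lam hlam
  have hlam0 : ∀ j, 0 < lam j := fun j => hM3.trans (hlam j)
  have hlamW : ∀ j, 2 * max (ω j) 0 + 1 ≤ lam j := by
    intro j
    calc 2 * max (ω j) 0 + 1 ≤ 2 * W + 1 := by linarith [hWj j]
      _ ≤ M := hM2
      _ ≤ lam j := (hlam j).le
  have hmupos : ∀ j, 0 < lam j - ω j := by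
    intro j; linarith [hlamW j, le_max_left (ω j) 0, le_max_right (ω j) 0]
  have hmuM : ∀ j, M/2 ≤ lam j - ω j := by
    intro j; linarith [hlamW j, le_max_left (ω j) 0, le_max_right (ω j) 0, hWj j, hM2, hlam j]
  have hratio : ∀ j, lam j ≤ 2 * (lam j - ω j) := by
    intro j; linarith [hlamW j, le_max_left (ω j) 0, le_max_right (ω j) 0]
  have hlamM : ∀ j, M/2 ≤ lam j := fun j => by linarith [hlam j, hM3]
  have hlamgt : ∀ j, max (ω j) 0 < lam j := by
    intro j
    calc max (ω j) 0 ≤ W := hWj j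
      _ < lam j := by linarith [hlam j, hM2, hWnn]
  set k : (Fin n → ℝ) → ℝ := fun t => ∏ j, lam j * Real.exp (-(lam j * t j)) with hkdef
  set p : (Fin n → ℝ) → ℝ := fun t => ∏ j, lam j * Real.exp (-((lam j - ω j) * t j)) with hpdef
  have hknn : ∀ t, 0 ≤ k t :=
    fun t => Finset.prod_nonneg fun j _ => mul_nonneg (hlam0 j).le (Real.exp_nonneg _)
  have hpnn : ∀ t, 0 ≤ p t :=
    fun t => Finset.prod_nonneg fun j _ => mul_nonneg (hlam0 j).le (Real.exp_nonneg _)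
  have hkf : ∀ t, k t • f t = (∏ j, lam j) • lapKer (fun j => ((lam j : ℝ) : ℂ)) f t := by
    intro t
    rw [hker, smul_smul]
    congr 1
    simp only [hkdef]
    rw [Finset.prod_mul_distrib]
    congr 1
    rw [← Real.exp_sum]
    congr 1
    exact Finset.sum_neg_distrib _
  have hkerint : IntegrableOn (lapKer (fun j => ((lam j : ℝ) : ℂ)) f) (orthant n) :=
    habs lam hlamgt
  have hkfint : IntegrableOn (fun t => k t • f t) (orthant n) := by
    have h1 := hkerint.smul (∏ j, lam j)
    have heq : (fun t => k t • f t)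
        = fun t => (∏ j, lam j) • lapKer (fun j => ((lam j : ℝ) : ℂ)) f t := funext hkf
    rw [heq]
    exact h1
  have hkint : IntegrableOn k (orthant n) := by
    rw [horth]
    simp only [hkdef]
    exact pi_exp_integrableOn lam lam (fun _ => 0) hlam0
  have hpint : IntegrableOn p (orthant n) := by
    rw [horth]
    simp only [hpdef]
    exact pi_exp_integrableOn lam (fun j => lam j - ω j) (fun _ => 0) hmupos
  have hkval : ∫ t in orthant n, k t = 1 := by
    rw [horth]
    simp only [hkdef]
    rw [pi_exp_integral lam lam (fun _ => 0) hlam0]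
    refine Finset.prod_eq_one fun j _ => ?_
    rw [mul_zero, neg_zero, Real.exp_zero, div_self (hlam0 j).ne', mul_one]
  have hgoalred : (∏ j, ((lam j : ℝ) : ℂ)) • lapTr f (fun j => ((lam j : ℝ) : ℂ))
      = ∫ t in orthant n, k t • f t := by
    simp only [lapTr]
    have h1 : (∏ j, ((lam j : ℝ) : ℂ)) = (((∏ j, lam j : ℝ) : ℝ) : ℂ) := by push_cast; rfl
    rw [h1, Complex.coe_smul, ← integral_smul]
    exact integral_congr_ae (ae_of_all _ fun t => (hkf t).symm)
  have hxval : x = ∫ t in orthant n, k t • x := by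
    rw [integral_smul_const, hkval, one_smul]
  rw [hgoalred]
  nth_rewrite 1 [hxval]
  rw [← integral_sub hkfint (hkint.smul_const x)]
  have hnorm : ‖∫ t in orthant n, (k t • f t - k t • x)‖
      ≤ ∫ t in orthant n, ‖k t • (f t - x)‖ := by
    refine (norm_integral_le_integral_norm _).trans_eq ?_
    exact integral_congr_ae (ae_of_all _ fun t => by simp only [smul_sub])
  set S : Fin n → Set (Fin n → ℝ) := fun j => {t | δ ≤ t j} with hSdef
  have hSm : ∀ j, MeasurableSet (S j) :=
    fun j => measurableSet_le measurable_const (measurable_pi_apply j)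
  set q : (Fin n → ℝ) → ℝ := fun t =>
    (ε/2) * k t + ∑ j, (S j).indicator (fun t => C * p t + ‖x‖ * k t) t with hqdef
  have hinner_nn : ∀ t, 0 ≤ C * p t + ‖x‖ * k t := fun t =>
    add_nonneg (mul_nonneg hC0 (hpnn t)) (mul_nonneg (norm_nonneg x) (hknn t))
  have hsum_nn : ∀ t, 0 ≤ ∑ j, (S j).indicator (fun t => C * p t + ‖x‖ * k t) t :=
    fun t => Finset.sum_nonneg fun j _ =>
      Set.indicator_nonneg (fun y _ => hinner_nn y) t
  have hpk : ∀ t, k t * Real.exp (∑ j, ω j * t j) = p t := by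
    intro t
    simp only [hkdef, hpdef]
    rw [Real.exp_sum, ← Finset.prod_mul_distrib]
    refine Finset.prod_congr rfl fun j _ => ?_
    rw [mul_assoc, ← Real.exp_add]
    congr 2
    ring
  have hpoint : ∀ t ∈ orthant n, ‖k t • (f t - x)‖ ≤ q t := by
    intro t ht
    rw [norm_smul, Real.norm_of_nonneg (hknn t)]
    simp only [hqdef]
    by_cases hcase : ∀ j, t j < δ
    · have h1 : ‖f t - x‖ ≤ ε/2 := (hδ t ht hcase).le
      have h2 : k t * ‖f t - x‖ ≤ (ε/2) * k t := by
        rw [mul_comm (ε/2) (k t)]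
        exact mul_le_mul_of_nonneg_left h1 (hknn t)
      linarith [hsum_nn t]
    · push_neg at hcase
      obtain ⟨j, hj⟩ := hcase
      have h1 : ‖f t - x‖ ≤ C * Real.exp (∑ i, ω i * t i) + ‖x‖ :=
        (norm_sub_le _ _).trans (by linarith [hC t ht])
      have h2 : k t * ‖f t - x‖ ≤ C * p t + ‖x‖ * k t := by
        have h3 := mul_le_mul_of_nonneg_left h1 (hknn t)
        have h4 : k t * (C * Real.exp (∑ i, ω i * t i)) = C * p t := by
          rw [← hpk t]; ring
        nlinarith [h3, h4]
      have h5 : C * p t + ‖x‖ * k t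
          ≤ ∑ i, (S i).indicator (fun t => C * p t + ‖x‖ * k t) t := by
        have h6 := Finset.single_le_sum
          (f := fun i => (S i).indicator (fun t => C * p t + ‖x‖ * k t) t)
          (fun i _ => Set.indicator_nonneg (fun y _ => hinner_nn y) t) (Finset.mem_univ j)
        simpa [Set.indicator_of_mem (show t ∈ S j from hj)] using h6
      have h6 : 0 ≤ (ε/2) * k t := mul_nonneg (by linarith) (hknn t)
      linarith
  have hg1int : IntegrableOn (fun t => ‖k t • (f t - x)‖) (orthant n) := by
    have h1 : IntegrableOn (fun t => k t • (f t - x)) (orthant n) := by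
      have h2 := hkfint.sub (hkint.smul_const x)
      have heq : (fun t => k t • (f t - x)) = fun t => k t • f t - k t • x :=
        funext fun t => smul_sub _ _ _
      rw [heq]
      exact h2
    exact h1.norm
  have hqsumint : ∀ j : Fin n, Integrable
      ((S j).indicator (fun t => C * p t + ‖x‖ * k t))
      (volume.restrict (orthant n)) :=
    fun j => ((hpint.const_mul C).add (hkint.const_mul ‖x‖)).indicator (hSm j)
  have hqint : IntegrableOn q (orthant n) := by
    simp only [hqdef]
    exact (hkint.const_mul (ε/2)).add (integrable_finset_sum _ fun j _ => hqsumint j)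
  have hmainle : ∫ t in orthant n, ‖k t • (f t - x)‖ ≤ ∫ t in orthant n, q t :=
    setIntegral_mono_on hg1int hqint horthm hpoint
  have hBj : ∀ j, S j ∩ orthant n
      = Set.univ.pi fun i => Ici (if i = j then δ else (0:ℝ)) := by
    intro j
    ext t
    simp only [hSdef, mem_inter_iff, mem_setOf_eq, orthant, mem_univ_pi, mem_Ici]
    constructor
    · rintro ⟨h1, h2⟩ i
      by_cases hij : i = j
      · rw [if_pos hij, hij]; exact h1
      · rw [if_neg hij]; exact h2 i
    · intro h
      refine ⟨by simpa using h j, fun i => ?_⟩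
      have := h i
      by_cases hij : i = j
      · rw [if_pos hij] at this; exact le_trans hδ0.le this
      · rwa [if_neg hij] at this
  have hbox : ∀ (c : Fin n → ℝ), (∀ i, 0 < c i) → (∀ i, lam i ≤ 2 * c i) →
      (∀ i, M/2 ≤ c i) → ∀ j,
      ∫ t in Set.univ.pi fun i => Ici (if i = j then δ else (0:ℝ)),
        ∏ i, lam i * Real.exp (-(c i * t i)) ≤ 2^n * Real.exp (-(M * (δ/2))) := by
    intro c hc1 hc2 hc3 j
    rw [pi_exp_integral lam c (fun i => if i = j then δ else 0) hc1]
    calc ∏ i, lam i / c i * Real.exp (-(c i * (if i = j then δ else 0)))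
        ≤ ∏ i, 2 * Real.exp (-(c i * (if i = j then δ else 0))) := by
          refine Finset.prod_le_prod
            (fun i _ => mul_nonneg (div_nonneg (hlam0 i).le (hc1 i).le) (Real.exp_nonneg _))
            (fun i _ => ?_)
          exact mul_le_mul_of_nonneg_right
            ((div_le_iff₀ (hc1 i)).mpr (by linarith [hc2 i])) (Real.exp_nonneg _)
      _ = 2^n * Real.exp (∑ i, -(c i * (if i = j then δ else 0))) := by
          rw [Finset.prod_mul_distrib, Finset.prod_const, Real.exp_sum]
          simp [Finset.card_univ]
      _ ≤ 2^n * Real.exp (-(M * (δ/2))) := by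
          refine mul_le_mul_of_nonneg_left (Real.exp_le_exp.mpr ?_) (by positivity)
          have hsum : ∑ i, -(c i * (if i = j then δ else 0)) = -(c j * δ) := by
            rw [Finset.sum_neg_distrib]
            congr 1
            simp only [mul_ite, mul_zero]
            rw [Finset.sum_ite_eq' Finset.univ j (fun i => c i * δ)]
            simp
          rw [hsum]
          nlinarith [hc3 j, hδ0]
  have hpintj : ∀ j, IntegrableOn p
      (Set.univ.pi fun i => Ici (if i = j then δ else (0:ℝ))) := by
    intro j
    simp only [hpdef]
    exact pi_exp_integrableOn lam (fun i => lam i - ω i) (fun i => if i = j then δ else 0) hmupos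
  have hkintj : ∀ j, IntegrableOn k
      (Set.univ.pi fun i => Ici (if i = j then δ else (0:ℝ))) := by
    intro j
    simp only [hkdef]
    exact pi_exp_integrableOn lam lam (fun i => if i = j then δ else 0) hlam0
  have hqval : ∫ t in orthant n, q t = ε/2
      + ∑ j, ∫ t in Set.univ.pi fun i => Ici (if i = j then δ else (0:ℝ)),
          (C * p t + ‖x‖ * k t) := by
    simp only [hqdef]
    rw [integral_add (hkint.const_mul (ε/2)) (integrable_finset_sum _ fun j _ => hqsumint j)]
    rw [integral_const_mul, hkval, mul_one]
    congr 1
    rw [integral_finset_sum _ fun j _ => hqsumint j]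
    refine Finset.sum_congr rfl fun j _ => ?_
    rw [integral_indicator (hSm j), Measure.restrict_restrict (hSm j), hBj j]
  have htail : ∀ j : Fin n,
      ∫ t in Set.univ.pi fun i => Ici (if i = j then δ else (0:ℝ)),
        (C * p t + ‖x‖ * k t)
      ≤ (C + ‖x‖) * (2^n * Real.exp (-(M * (δ/2)))) := by
    intro j
    rw [integral_add ((hpintj j).const_mul C) ((hkintj j).const_mul ‖x‖),
      integral_const_mul, integral_const_mul]
    have hp2 : ∫ t in Set.univ.pi fun i => Ici (if i = j then δ else (0:ℝ)), p t
        ≤ 2^n * Real.exp (-(M * (δ/2))) := by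
      have := hbox (fun i => lam i - ω i) hmupos hratio hmuM j
      simpa only [hpdef] using this
    have hk2 : ∫ t in Set.univ.pi fun i => Ici (if i = j then δ else (0:ℝ)), k t
        ≤ 2^n * Real.exp (-(M * (δ/2))) := by
      have := hbox lam hlam0 (fun i => by linarith [hlam0 i]) hlamM j
      simpa only [hkdef] using this
    have h1 := mul_le_mul_of_nonneg_left hp2 hC0
    have h2 := mul_le_mul_of_nonneg_left hk2 (norm_nonneg x)
    nlinarith [h1, h2]
  have hsumtail : ∑ j, ∫ t in Set.univ.pi fun i => Ici (if i = j then δ else (0:ℝ)),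
      (C * p t + ‖x‖ * k t)
      ≤ (n : ℝ) * ((C + ‖x‖) * (2^n * Real.exp (-(M * (δ/2))))) := by
    have h := Finset.sum_le_card_nsmul Finset.univ _ _ (fun j _ => htail j)
    rwa [Finset.card_univ, Fintype.card_fin, nsmul_eq_mul] at h
  have hKE : (n : ℝ) * ((C + ‖x‖) * (2^n * Real.exp (-(M * (δ/2)))))
      ≤ K * Real.exp (-(M * (δ/2))) := by
    rw [hKdef]
    have hE : 0 ≤ Real.exp (-(M * (δ/2))) := Real.exp_nonneg _
    nlinarith [hE, hC0, norm_nonneg x, Nat.cast_nonneg (α := ℝ) n,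
      pow_nonneg (by norm_num : (0:ℝ) ≤ 2) n]
  calc ‖∫ t in orthant n, (k t • f t - k t • x)‖
      ≤ ∫ t in orthant n, ‖k t • (f t - x)‖ := hnorm
    _ ≤ ∫ t in orthant n, q t := hmainle
    _ = ε/2 + ∑ j, ∫ t in Set.univ.pi fun i => Ici (if i = j then δ else (0:ℝ)),
          (C * p t + ‖x‖ * k t) := hqval
    _ ≤ ε/2 + K * Real.exp (-(M * (δ/2))) := by linarith [hsumtail, hKE]
    _ < ε/2 + ε/2 := by linarith [hM1]
    _ = ε := by ring
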